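/- If ν : ℝ≥0 → ℝ satisfies 0 < m ≤ ν(s) ≤ L and s ↦ ν(s)s is Lipschitz with constant L, then the vector field F(x) = ν(‖x‖)x on ℝ² satisfies ‖F(x) − F(y)‖ ≤ 3L‖x − y‖ for all x, y. -/
import Mathlib


/-- Lipschitz continuity of F(x) = ν(‖x‖)·x on ℝ² with constant 3L. -/
theorem stmt_3 (ν : ℝ → ℝ) (m L : ℝ) (hm : 0 < m)
    (hbound : ∀ s, 0 ≤ s → m ≤ ν s ∧ ν s ≤ L)
    (hlip : ∀ s₁ s₂, 0 ≤ s₁ → 0 ≤ s₂ → |ν s₂ * s₂ - ν s₁ * s₁| ≤ L * |s₂ - s₁|)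
    (x y : EuclideanSpace ℝ (Fin 2)) :
    ‖ν ‖x‖ • x - ν ‖y‖ • y‖ ≤ 3 * L * ‖x - y‖ := by
  set a := ‖x‖ with hadef
  set b := ‖y‖ with hbdef
  have ha : 0 ≤ a := norm_nonneg x
  have hb : 0 ≤ b := norm_nonneg y
  have hνa0 : 0 ≤ ν a := le_trans hm.le (hbound a ha).1
  have hνaL : ν a ≤ L := (hbound a ha).2
  have key : ν a • x - ν b • y = ν a • (x - y) + (ν a - ν b) • y := by
    simp only [smul_sub, sub_smul]; abel
  have hab : |a - b| ≤ ‖x - y‖ := by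
    rw [hadef, hbdef]; exact abs_norm_sub_norm_le x y
  have h1 : ‖ν a • (x - y)‖ ≤ L * ‖x - y‖ := by
    rw [norm_smul, Real.norm_eq_abs, abs_of_nonneg hνa0]
    exact mul_le_mul_of_nonneg_right hνaL (norm_nonneg _)
  have h2 : ‖(ν a - ν b) • y‖ ≤ 2 * L * ‖x - y‖ := by
    rw [norm_smul, Real.norm_eq_abs, ← hbdef]
    have : |ν a - ν b| * b = |(ν a * a - ν b * b) - ν a * (a - b)| := by
      rw [show (ν a * a - ν b * b) - ν a * (a - b) = (ν a - ν b) * b by ring,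
        abs_mul, abs_of_nonneg hb]
    rw [this]
    calc |(ν a * a - ν b * b) - ν a * (a - b)|
        ≤ |ν a * a - ν b * b| + |ν a * (a - b)| := abs_sub _ _
      _ ≤ L * |a - b| + L * |a - b| := by
          refine add_le_add (hlip b a hb ha) ?_
          rw [abs_mul, abs_of_nonneg hνa0]
          exact mul_le_mul_of_nonneg_right hνaL (abs_nonneg _)
      _ = 2 * L * |a - b| := by ring
      _ ≤ 2 * L * ‖x - y‖ := by
          apply mul_le_mul_of_nonneg_left hab
          linarith [hνa0.trans hνaL]
  calc ‖ν a • x - ν b • y‖ = ‖ν a • (x - y) + (ν a - ν b) • y‖ := by rw [key]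
    _ ≤ ‖ν a • (x - y)‖ + ‖(ν a - ν b) • y‖ := norm_add_le _ _
    _ ≤ L * ‖x - y‖ + 2 * L * ‖x - y‖ := add_le_add h1 h2
    _ = 3 * L * ‖x - y‖ := by ring
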